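/- Let S and T be fold strings with associated folding morphisms θ_S and θ_T. Then the folding morphism of the folding convolution S*T is the composition: θ_{S*T} = θ_S ∘ θ_T. -/

import Mathlib

open scoped Classical

/-- Letters of the folding alphabet {D, U}. -/
inductive FoldLetter : Type
  | D : FoldLetter
  | U : FoldLetter
deriving DecidableEq

/-- Words over {D, U}. -/
abbrev FWord := List FoldLetter

/-- The letter morphism μ swapping D and U. -/
def mir : FoldLetter → FoldLetter
  | .D => .U
  | .U => .D

/-- S̄ = μ(τ(S)): reverse the word and swap D and U. -/
def fbar (S : FWord) : FWord := (S.reverse).map mir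

/-- The folding convolution S * T. -/
def conv (S : FWord) : FWord → FWord
  | [] => S
  | b :: T => S ++ b :: conv (fbar S) T

/-- A fold string: a nonempty word over {D,U} starting with D. -/
def IsFoldString (S : FWord) : Prop := S ≠ [] ∧ S.head? = some FoldLetter.D

/-- The alphabet A = {a,b,c,d}, encoded as ZMod 4 (a = 0, b = 1, c = 2, d = 3),
so that σ is addition of 1 and f is k ↦ i^k. -/
abbrev Alpha := ZMod 4

/-- Words over A. -/
abbrev AWord := List Alpha

/-- w(D) = 1, w(U) = -1. -/
def wInt : FoldLetter → ℤ
  | .D => 1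
  | .U => -1

/-- The homomorphism w on words. -/
def wSum (S : FWord) : ℤ := (S.map wInt).sum

/-- θ_S(a) = e₀ e₁ ⋯ e_{m-1} with e₀ = a and e_i = σ^{w(a₁⋯a_i)}(a). -/
def thetaA (S : FWord) : AWord :=
  (List.range (S.length + 1)).map (fun i => ((wSum (S.take i) : ℤ) : Alpha))

/-- The word operation στ (reverse, then cyclically shift each letter). -/
def st (v : AWord) : AWord := v.reverse.map (· + 1)

/-- θ_S on a letter: θ_S(σ^k(a)) = (στ)^k (θ_S(a)). -/
def thetaL (S : FWord) (e : Alpha) : AWord := st^[e.val] (thetaA S)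

/-- The folding morphism θ_S as a monoid endomorphism of A*. -/
def theta (S : FWord) (v : AWord) : AWord := v.flatMap (thetaL S)

/-- f on letters: f(a) = 1, f(b) = i, f(c) = -1, f(d) = -i. -/
noncomputable def fL : Alpha → ℂ := fun e => Complex.I ^ e.val

/-- The homomorphism f : A* → (ℂ, +). -/
noncomputable def fW (v : AWord) : ℂ := (v.map fL).sum

/-- The k-th point z_k of the curve of a word v. -/
noncomputable def pt (v : AWord) (k : ℕ) : ℂ := fW (v.take k)

/-- The curve of v traverses a segment twice. -/
def TraversesTwice (v : AWord) : Prop :=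
  ∃ k l, k < v.length ∧ l < v.length ∧ k ≠ l ∧
    ({pt v k, pt v (k + 1)} : Set ℂ) = ({pt v l, pt v (l + 1)} : Set ℂ)

/-- The fold string S is self-avoiding. -/
def SelfAvoiding (S : FWord) : Prop :=
  ∀ n : ℕ, 1 ≤ n → ¬ TraversesTwice ((theta S)^[n] [0])

/-- z ∈ ℂ is a Gaussian integer. -/
def IsGaussianInt (z : ℂ) : Prop := ∃ p q : ℤ, z = (p : ℂ) + (q : ℂ) * Complex.I

/-- The number of indices k ∈ {0, …, |v|} with z_k = z (occurrences of z among
the points of the curve of v). -/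
noncomputable def countAt (v : AWord) (z : ℂ) : ℕ :=
  ((Finset.range (v.length + 1)).filter (fun k => pt v k = z)).card

/-- The fold string S is planefilling. -/
def Planefilling (S : FWord) : Prop :=
  ∀ R : ℝ, 0 < R → ∃ n : ℕ, 1 ≤ n ∧ ∃ q : ℂ, IsGaussianInt q ∧
    ∀ z : ℂ, IsGaussianInt z → ‖z - q‖ ≤ R →
      2 ≤ countAt ((theta S)^[n] [0]) z

/-- The word θ_S(abcd), whose curve is the θ-loop of S. -/
def loopWord (S : FWord) : AWord := theta S [0, 1, 2, 3]

/-- The rounding of the closed curve of a word v (all of whose steps are unit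
segments and with f(v) = 0), as a subset of ℂ. -/
noncomputable def roundedCurve (v : AWord) : Set ℂ :=
  ⋃ k ∈ Finset.range v.length,
    (segment ℝ (pt v k + (pt v (k + 1) - pt v k) / 4)
        (pt v (k + 1) - (pt v (k + 1) - pt v k) / 4) ∪
      segment ℝ (pt v (k + 1) - (pt v (k + 1) - pt v k) / 4)
        (pt v ((k + 1) % v.length) +
          (pt v ((k + 1) % v.length + 1) - pt v ((k + 1) % v.length)) / 4))

/-- The number of indices k ∈ {0, …, |v| - 1} with z_k = z (occurrences of z among
the vertices of the closed curve of v). -/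
noncomputable def vertexCount (v : AWord) (z : ℂ) : ℕ :=
  ((Finset.range v.length).filter (fun k => pt v k = z)).card

/-- The closed curve of v is maximally simple: it is simple, and every Gaussian
integer lying in a bounded connected component of the complement of its rounding
occurs exactly twice among its vertices. -/
def MaximallySimple (v : AWord) : Prop :=
  ¬ TraversesTwice v ∧
    ∀ z : ℂ, IsGaussianInt z → z ∉ roundedCurve v →
      Bornology.IsBounded (connectedComponentIn (roundedCurve v)ᶜ z) →
      vertexCount v z = 2

/-- A D-word: letters from {a,c} (even) and {b,d} (odd) alternate. -/
def IsDWord (v : AWord) : Prop :=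
  ∀ k (h : k + 1 < v.length),
    (v[k]'(Nat.lt_of_succ_lt h)).val % 2 ≠ (v[k + 1]'h).val % 2

/-- A loop word: a nonempty D-word with f(v) = 0. -/
def IsLoopWord (v : AWord) : Prop := v ≠ [] ∧ IsDWord v ∧ fW v = 0

/-- The eight square words σᵏ(abcd), σᵏ(adcb), k = 0,1,2,3. -/
def squareWords : List AWord :=
  [[0, 1, 2, 3], [1, 2, 3, 0], [2, 3, 0, 1], [3, 0, 1, 2],
   [0, 3, 2, 1], [1, 0, 3, 2], [2, 1, 0, 3], [3, 2, 1, 0]]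

/-- K[v] ⊆ ℂ: the union of the segments of the curve of v. -/
noncomputable def KSet (v : AWord) : Set ℂ :=
  ⋃ k ∈ Finset.range v.length, segment ℝ (pt v k) (pt v (k + 1))

/-- The number of boundary points of S: Gaussian integers visited exactly once
by the curve of θ_S(a). -/
noncomputable def rCount (S : FWord) : ℕ :=
  ((Finset.range ((thetaA S).length + 1)).filter
    (fun k => countAt (thetaA S) (pt (thetaA S) k) = 1)).card

/-- The k-th point Z_k of the infinite curve of S. -/
noncomputable def Zpt (S : FWord) (k : ℕ) : ℂ := pt ((theta S)^[k] [0]) k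

/-- The fold string S is perfect. -/
def IsPerfectFold (S : FWord) : Prop :=
  SelfAvoiding S ∧
    ∀ p q : ℂ, IsGaussianInt p → IsGaussianInt q → ‖p - q‖ = 1 →
      ∃! jk : Fin 4 × ℕ,
        ({Complex.I ^ (jk.1 : ℕ) * Zpt S jk.2,
          Complex.I ^ (jk.1 : ℕ) * Zpt S (jk.2 + 1)} : Set ℂ) = ({p, q} : Set ℂ)

section Aux

/-- w valued in Alpha. -/
def wA (x : FoldLetter) : Alpha := ((wInt x : ℤ) : Alpha)

/-- Running partial sums starting at c. -/
def psA (c : Alpha) : FWord → AWord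
  | [] => [c]
  | x :: xs => c :: psA (c + wA x) xs

lemma wSum_cons (x : FoldLetter) (xs : FWord) : wSum (x :: xs) = wInt x + wSum xs := by
  simp [wSum]

lemma psA_spec (S : FWord) (c : Alpha) :
    psA c S = (List.range (S.length + 1)).map
      (fun i => c + ((wSum (S.take i) : ℤ) : Alpha)) := by
  induction S generalizing c with
  | nil => simp [psA, wSum]
  | cons x xs ih =>
    rw [List.length_cons, List.range_succ_eq_map]
    simp only [List.map_cons, List.map_map]
    rw [psA, ih]
    congr 1
    · simp [wSum]
    · apply List.map_congr_left
      intro i _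
      simp only [Function.comp_apply, Nat.succ_eq_add_one, List.take_succ_cons, wSum_cons, wA]
      push_cast
      ring

lemma thetaA_eq (S : FWord) : thetaA S = psA 0 S := by
  rw [psA_spec, thetaA]
  simp

lemma psA_shift (S : FWord) (c : Alpha) :
    psA c S = (psA 0 S).map (· + c) := by
  rw [psA_spec, psA_spec, List.map_map]
  apply List.map_congr_left
  intro i _
  simp [add_comm]

lemma psA_append_cons (S R : FWord) (b : FoldLetter) (c : Alpha) :
    psA c (S ++ b :: R) = psA c S ++ psA (c + ((wSum S : ℤ) : Alpha) + wA b) R := by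
  induction S generalizing c with
  | nil => simp [psA, wSum]
  | cons x xs ih =>
    rw [List.cons_append, psA, psA, ih, List.cons_append]
    congr 3
    rw [wSum_cons, wA]
    push_cast
    ring

lemma wSum_fbar (S : FWord) : wSum (fbar S) = -wSum S := by
  induction S with
  | nil => simp [fbar, wSum]
  | cons x xs ih =>
    have hm : wInt (mir x) = -wInt x := by cases x <;> simp [mir, wInt]
    have h1 : fbar (x :: xs) = fbar xs ++ [mir x] := by simp [fbar]
    have h2 : wSum (fbar xs ++ [mir x]) = wSum (fbar xs) + wInt (mir x) := by
      simp [wSum]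
    rw [h1, h2, ih, hm, wSum_cons]
    ring

lemma psA_fbar (S : FWord) (c : Alpha) :
    psA c (fbar S) = (psA (c - ((wSum S : ℤ) : Alpha)) S).reverse := by
  induction S generalizing c with
  | nil => simp [fbar, psA, wSum]
  | cons x xs ih =>
    have hfb : fbar (x :: xs) = fbar xs ++ mir x :: ([] : FWord) := by
      simp [fbar]
    rw [hfb, psA_append_cons, ih, wSum_fbar]
    have hm : wA (mir x) = -wA x := by
      cases x <;> simp [mir, wA, wInt]
    rw [wSum_cons]
    simp only [psA, List.reverse_cons, hm]
    congr 2
    · congr 1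
      rw [wA]
      push_cast
      ring
    · rw [wA]
      push_cast
      ring

lemma st_map_add (v : AWord) (c : Alpha) :
    st (v.map (· + c)) = (st v).map (· + c) := by
  simp only [st, ← List.map_reverse, List.map_map]
  congr 1
  funext x
  simp only [Function.comp_apply]
  ring

lemma st_iter_map_add (k : ℕ) (v : AWord) (c : Alpha) :
    st^[k] (v.map (· + c)) = (st^[k] v).map (· + c) := by
  induction k generalizing v with
  | zero => simp
  | succ k ih => rw [Function.iterate_succ_apply, Function.iterate_succ_apply, st_map_add, ih]

lemma st_st (v : AWord) : st (st v) = v.map (· + 2) := by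
  simp only [st, ← List.map_reverse, List.map_map, List.reverse_reverse]
  congr 1
  funext x
  simp only [Function.comp_apply]
  ring

lemma st_iter_two (v : AWord) : st^[2] v = v.map (· + 2) := by
  rw [show (2 : ℕ) = 1 + 1 from rfl, Function.iterate_add_apply]
  simp [st_st]

lemma st_iter_four (v : AWord) : st^[4] v = v := by
  rw [show (4 : ℕ) = 2 + 2 from rfl, Function.iterate_add_apply, st_iter_two, st_iter_two,
    List.map_map]
  have h : ∀ x : Alpha, x + 2 + 2 = x := by decide
  simp only [Function.comp_def, h, List.map_id']

lemma st_iter_four_mul (n : ℕ) (v : AWord) : st^[4 * n] v = v := by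
  induction n with
  | zero => simp
  | succ n ih =>
    rw [show 4 * (n + 1) = 4 * n + 4 by ring, Function.iterate_add_apply, st_iter_four, ih]

lemma st_iter_mod (k : ℕ) (v : AWord) : st^[k % 4] v = st^[k] v := by
  conv_rhs => rw [← Nat.div_add_mod k 4]
  rw [add_comm, Function.iterate_add_apply, st_iter_four_mul]

lemma alpha_natCast_val (e : Alpha) : ((e.val : ℕ) : Alpha) = e := by
  fin_cases e <;> rfl

lemma thetaL_natCast (S : FWord) (k : ℕ) :
    thetaL S ((k : ℕ) : Alpha) = st^[k] (thetaA S) := by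
  rw [thetaL, ZMod.val_natCast, st_iter_mod]

lemma thetaL_add_natCast (S : FWord) (e : Alpha) (k : ℕ) :
    thetaL S (e + (k : ℕ)) = st^[k] (thetaL S e) := by
  have : e + (k : ℕ) = ((e.val + k : ℕ) : Alpha) := by
    push_cast
    rw [alpha_natCast_val]
  rw [this, thetaL_natCast, add_comm, Function.iterate_add_apply]
  rfl

lemma thetaL_add_one (S : FWord) (e : Alpha) : thetaL S (e + 1) = st (thetaL S e) := by
  have h := thetaL_add_natCast S e 1
  simpa using h

lemma thetaA_fbar (S : FWord) :
    thetaA (fbar S) = (st (thetaA S)).map (· + (-((wSum S : ℤ) : Alpha) - 1)) := by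
  rw [thetaA_eq, psA_fbar, thetaA_eq, st, List.map_map, List.map_reverse]
  congr 1
  rw [psA_shift S (0 - ((wSum S : ℤ) : Alpha))]
  apply List.map_congr_left
  intro x _
  simp only [Function.comp_apply]
  ring

/-- The crucial per-letter identity. -/
lemma thetaL_fbar_key (S : FWord) (b : FoldLetter) (e : Alpha) :
    (thetaL (fbar S) e).map (· + (((wSum S : ℤ) : Alpha) + wA b)) = thetaL S (e + wA b) := by
  set Δ : Alpha := ((wSum S : ℤ) : Alpha) with hΔ
  have hL : thetaL (fbar S) e = (st^[e.val + 1] (thetaA S)).map (· + (-Δ - 1)) := by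
    rw [thetaL, thetaA_fbar, st_iter_map_add, ← Function.iterate_succ_apply]
  cases b with
  | D =>
    have hw : wA FoldLetter.D = 1 := by simp [wA, wInt]
    rw [hw, hL, List.map_map]
    have h1 : ∀ x : Alpha, x + (-Δ - 1) + (Δ + 1) = x := by intro x; ring
    have : ((· + (Δ + 1)) ∘ (· + (-Δ - 1)) : Alpha → Alpha) = id := by
      funext x
      simp [h1 x]
    rw [this, List.map_id, thetaL_add_one, thetaL]
    exact Function.iterate_succ_apply' st e.val (thetaA S)
  | U =>
    have hw : wA FoldLetter.U = 3 := by decide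
    rw [hw, hL, List.map_map]
    have : ((· + (Δ + 3)) ∘ (· + (-Δ - 1)) : Alpha → Alpha) = (· + 2) := by
      funext x
      simp only [Function.comp_apply]
      ring
    rw [this, ← st_iter_two, ← Function.iterate_add_apply]
    have h3 : (3 : Alpha) = ((3 : ℕ) : Alpha) := by decide
    rw [h3, thetaL_add_natCast, thetaL, ← Function.iterate_add_apply]
    congr 1
    omega

lemma psA_conv (T S : FWord) : psA 0 (conv S T) = theta S (psA 0 T) := by
  induction T generalizing S with
  | nil =>
    show psA 0 S = theta S [0]
    simp [theta, thetaL, ZMod.val_zero, thetaA_eq]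
  | cons b T' ih =>
    show psA 0 (S ++ b :: conv (fbar S) T') = theta S (0 :: psA (0 + wA b) T')
    rw [psA_append_cons]
    simp only [zero_add]
    rw [psA_shift (conv (fbar S) T') (((wSum S : ℤ) : Alpha) + wA b), ih, psA_shift T' (wA b)]
    rw [theta, List.map_flatMap, theta, List.flatMap_cons, List.flatMap_map]
    congr 1
    · rw [thetaL, ZMod.val_zero, Function.iterate_zero, id, thetaA_eq]
    · congr 1
      funext e
      exact thetaL_fbar_key S b e

lemma thetaA_conv (S T : FWord) : thetaA (conv S T) = theta S (thetaA T) := by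
  rw [thetaA_eq, thetaA_eq, psA_conv]

lemma theta_st (S : FWord) (u : AWord) : theta S (st u) = st (theta S u) := by
  rw [theta, st, List.flatMap_map, theta, st, List.reverse_flatMap, List.map_flatMap]
  congr 1
  funext e
  rw [thetaL_add_one, st]
  rfl

lemma theta_st_iter (S : FWord) (k : ℕ) (u : AWord) :
    theta S (st^[k] u) = st^[k] (theta S u) := by
  induction k generalizing u with
  | zero => simp
  | succ k ih =>
    rw [Function.iterate_succ_apply, ih, theta_st, ← Function.iterate_succ_apply]

end Aux
/-- θ_{S*T} = θ_S ∘ θ_T. -/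
theorem theta_conv (S T : FWord) (hS : IsFoldString S) (hT : IsFoldString T) (v : AWord) :
    theta (conv S T) v = theta S (theta T v) := by
  have h : ∀ e, thetaL (conv S T) e = theta S (thetaL T e) := by
    intro e
    rw [thetaL, thetaA_conv, ← theta_st_iter]
    rfl
  show v.flatMap (thetaL (conv S T)) = (v.flatMap (thetaL T)).flatMap (thetaL S)
  rw [List.flatMap_assoc]
  congr 1
  funext e
  rw [h e]
  rfl
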